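/- Let m > 0 and let φ̃, ψ̃ : ℝ³ → ℂ be Schwartz functions. Define the Newton–Wigner wave function ψ_NW(t,x) := (2π)^{−3/2} ∫_{ℝ³} (2ε_p)^{−1/2} e^{i(x·p − t ε_p)} ψ̃(p) dp, and similarly φ_NW. Then for every t ∈ ℝ: ∫_{ℝ³} conj(φ_NW(t,x)) · ψ_NW(t,x) dx = ∫_{ℝ³} (2ε_p)^{−1} · conj(φ̃(p)) · ψ̃(p) dp = KG_t(φ^{+1}, ψ^{+1}); i.e., the Klein–Gordon inner product of positive-frequency solutions assumes the standard Schrödinger form when expressed in terms of the Newton–Wigner wave functions. -/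

import Mathlib

open MeasureTheory

noncomputable section

/-- Relativistic energy `ε_p = √(‖p‖² + m²)`. -/
def relEnergy (m : ℝ) (p : EuclideanSpace ℝ (Fin 3)) : ℝ :=
  Real.sqrt (‖p‖ ^ 2 + m ^ 2)

/-- The `σ`-frequency solution of the Klein–Gordon equation with momentum-space profile
`ψ̃`:  `ψ^σ(t,x) = (2π)^{−3/2} ∫ (2ε_p)⁻¹ e^{i(x·p − σ t ε_p)} ψ̃(p) dp`. -/
def kgSolution (m σ : ℝ) (ψ : SchwartzMap (EuclideanSpace ℝ (Fin 3)) ℂ)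
    (t : ℝ) (x : EuclideanSpace ℝ (Fin 3)) : ℂ :=
  (((2 * Real.pi) ^ (-(3 : ℝ) / 2) : ℝ) : ℂ) *
    ∫ p : EuclideanSpace ℝ (Fin 3),
      ((2 * relEnergy m p : ℝ) : ℂ)⁻¹ *
        Complex.exp (Complex.I *
          (((inner ℝ x p : ℝ) : ℂ) - (σ : ℂ) * (t : ℂ) * ((relEnergy m p : ℝ) : ℂ))) *
        ψ p

/-- The Klein–Gordon pairing at time `t`:
`KG_t(φ,ψ) = i ∫ [conj(φ(t,x))·∂_tψ(t,x) − conj(∂_tφ(t,x))·ψ(t,x)] dx`. -/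
def kgPairing (φ ψ : ℝ → EuclideanSpace ℝ (Fin 3) → ℂ) (t : ℝ) : ℂ :=
  Complex.I * ∫ x : EuclideanSpace ℝ (Fin 3),
    (starRingEnd ℂ (φ t x) * deriv (fun t' => ψ t' x) t -
      starRingEnd ℂ (deriv (fun t' => φ t' x) t) * ψ t x)

/-- The Newton–Wigner wave function
`ψ_NW(t,x) = (2π)^{−3/2} ∫ (2ε_p)^{−1/2} e^{i(x·p − t ε_p)} ψ̃(p) dp`. -/
def newtonWigner (m : ℝ) (ψ : SchwartzMap (EuclideanSpace ℝ (Fin 3)) ℂ)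
    (t : ℝ) (x : EuclideanSpace ℝ (Fin 3)) : ℂ :=
  (((2 * Real.pi) ^ (-(3 : ℝ) / 2) : ℝ) : ℂ) *
    ∫ p : EuclideanSpace ℝ (Fin 3),
      ((Real.sqrt (2 * relEnergy m p) : ℝ) : ℂ)⁻¹ *
        Complex.exp (Complex.I *
          (((inner ℝ x p : ℝ) : ℂ) - (t : ℂ) * ((relEnergy m p : ℝ) : ℂ))) *
        ψ p



section Aux
open Complex FourierTransform

local notation "E3" => EuclideanSpace ℝ (Fin 3)

lemma iteratedDeriv_rpow_smul {F : Type*} [NormedAddCommGroup F] [NormedSpace ℝ F]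
    (r : ℝ) (v : F) (n : ℕ) :
    ∀ u : ℝ, 0 < u → iteratedDeriv n (fun s : ℝ => s ^ r • v) u
      = ((∏ i ∈ Finset.range n, (r - i)) * u ^ (r - n)) • v := by
  induction n with
  | zero => intro u hu; simp [iteratedDeriv_zero]
  | succ n ih =>
    intro u hu
    have hev : iteratedDeriv n (fun s : ℝ => s ^ r • v)
        =ᶠ[nhds u] fun s => ((∏ i ∈ Finset.range n, (r - i)) * s ^ (r - n)) • v := by
      filter_upwards [isOpen_Ioi.mem_nhds hu] with s hs using ih s hs
    rw [iteratedDeriv_succ, hev.deriv_eq]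
    have h1 : HasDerivAt (fun s : ℝ => ((∏ i ∈ Finset.range n, (r - i)) * s ^ (r - n)) • v)
        (((∏ i ∈ Finset.range n, (r - i)) * ((r - n) * u ^ (r - n - 1))) • v) u := by
      have h0 : HasDerivAt (fun s : ℝ => s ^ (r - n)) ((r - n) * u ^ (r - n - 1)) u :=
        Real.hasDerivAt_rpow_const (Or.inl hu.ne')
      simpa [smul_smul, mul_assoc] using ((h0.const_mul (∏ i ∈ Finset.range n, (r - i))).smul_const v)
    rw [h1.deriv, Finset.prod_range_succ]
    have : r - ↑(n + 1) = r - n - 1 := by push_cast; ring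
    rw [this, mul_assoc]

lemma iteratedDeriv_cexp_const (c : ℂ) (n : ℕ) (u : ℝ) :
    iteratedDeriv n (fun s : ℝ => Complex.exp (c * s)) u = c ^ n * Complex.exp (c * u) := by
  induction n generalizing u with
  | zero => simp
  | succ n ih =>
    rw [iteratedDeriv_succ]
    have : iteratedDeriv n (fun s : ℝ => Complex.exp (c * s))
        = fun u : ℝ => c ^ n * Complex.exp (c * u) := funext fun u => ih u
    rw [this]
    have h0 : HasDerivAt (fun s : ℝ => c * (s : ℂ)) c u := by
      simpa using ((hasDerivAt_id u).ofReal_comp).const_mul c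
    have h1 : HasDerivAt (fun s : ℝ => Complex.exp (c * s)) (Complex.exp (c * u) * c) u := h0.cexp
    rw [(h1.const_mul (c ^ n)).deriv]
    ring


lemma hasTemperateGrowth_comp_of_bounds {E F : Type*} [NormedAddCommGroup E] [NormedSpace ℝ E]
    [NormedAddCommGroup F] [NormedSpace ℝ F]
    {f : E → ℝ} (hf : Function.HasTemperateGrowth f)
    {g : ℝ → F} {c : ℝ}
    (hg : ContDiffOn ℝ ((⊤ : ℕ∞) : WithTop ℕ∞) g (Set.Ioi c))
    (hmem : ∀ x, f x ∈ Set.Ioi c)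
    (hb : ∀ n : ℕ, ∃ (k : ℕ) (C : ℝ), 0 ≤ C ∧ ∀ s ∈ Set.Ioi c, ‖iteratedDeriv n g s‖ ≤ C * (1 + |s|) ^ k) :
    Function.HasTemperateGrowth (fun x => g (f x)) := by
  have hsmooth : ContDiff ℝ ((⊤ : ℕ∞) : WithTop ℕ∞) (fun x => g (f x)) := by
    rw [← contDiffOn_univ]
    exact ContDiffOn.comp hg (hf.1.contDiffOn) (fun x _ => hmem x)
  refine ⟨hsmooth, fun n => ?_⟩
  obtain ⟨kf, Cf, hCf0, hCf⟩ := hf.norm_iteratedFDeriv_le_uniform n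
  -- uniform bounds for g-derivatives up to n
  choose kg Cg hCg0 hCg using hb
  set K : ℕ := (Finset.range (n + 1)).sup kg with hK
  set CG : ℝ := max 1 ((Finset.range (n + 1)).sup' (by simp) Cg) with hCG
  have hCG1 : (1:ℝ) ≤ CG := le_max_left _ _
  have hgb : ∀ i ≤ n, ∀ s ∈ Set.Ioi c, ‖iteratedDeriv i g s‖ ≤ CG * (1 + |s|) ^ K := by
    intro i hi s hs
    refine (hCg i s hs).trans ?_
    have h1s : (1:ℝ) ≤ 1 + |s| := by
      have := abs_nonneg s; linarith
    have hCgi : Cg i ≤ CG :=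
      le_trans (Finset.le_sup' Cg (Finset.mem_range_succ_iff.2 hi)) (le_max_right _ _)
    have hki : kg i ≤ K := Finset.le_sup (Finset.mem_range_succ_iff.2 hi)
    have hpow : (1 + |s|) ^ kg i ≤ (1 + |s|) ^ K := pow_le_pow_right₀ h1s hki
    exact mul_le_mul hCgi hpow (by positivity) (le_trans zero_le_one hCG1)
  refine ⟨kf * K + kf * n, (n.factorial : ℝ) * (CG * (1 + Cf) ^ K) * (1 + Cf) ^ n, fun x => ?_⟩
  have h1x : (1:ℝ) ≤ (1 + ‖x‖) := by
    have := norm_nonneg x; linarith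
  have hfx : |f x| ≤ Cf * (1 + ‖x‖) ^ kf := by
    simpa using hCf 0 (Nat.zero_le n) x
  have h1fx : 1 + |f x| ≤ (1 + Cf) * (1 + ‖x‖) ^ kf := by
    have : (1:ℝ) ≤ (1 + ‖x‖) ^ kf := one_le_pow₀ h1x
    nlinarith
  set D : ℝ := max 1 (Cf * (1 + ‖x‖) ^ kf) with hD
  have hD1 : (1:ℝ) ≤ D := le_max_left _ _
  have hDle : D ≤ (1 + Cf) * (1 + ‖x‖) ^ kf := by
    rcases max_cases 1 (Cf * (1 + ‖x‖) ^ kf) with ⟨h, _⟩ | ⟨h, _⟩ <;> rw [hD, h]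
    · have : (1:ℝ) ≤ (1 + ‖x‖) ^ kf := one_le_pow₀ h1x
      nlinarith
    · have : (1:ℝ) ≤ (1 + ‖x‖) ^ kf := one_le_pow₀ h1x
      nlinarith
  have key : ‖iteratedFDeriv ℝ n (fun x => g (f x)) x‖
      ≤ (n.factorial : ℝ) * (CG * (1 + |f x|) ^ K) * D ^ n := by
    have := norm_iteratedFDerivWithin_comp_le (g := g) (f := f) (n := n)
      (s := Set.univ) (t := Set.Ioi c) (N := ((⊤ : ℕ∞) : WithTop ℕ∞))
      hg (hf.1.contDiffOn) (mod_cast le_top) (isOpen_Ioi.uniqueDiffOn) uniqueDiffOn_univ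
      (fun x _ => hmem x) (Set.mem_univ x)
      (C := CG * (1 + |f x|) ^ K) (D := D) ?_ ?_
    · simpa [iteratedFDerivWithin_univ, Function.comp_def] using this
    · intro i hi
      rw [iteratedFDerivWithin_of_isOpen i isOpen_Ioi (hmem x)]
      rw [norm_iteratedFDeriv_eq_norm_iteratedDeriv]
      exact hgb i hi (f x) (hmem x)
    · intro i hi1 hin
      rw [iteratedFDerivWithin_univ]
      refine (hCf i hin x).trans ?_
      calc Cf * (1 + ‖x‖) ^ kf ≤ D := le_max_right _ _
        _ ≤ D ^ i := le_self_pow₀ hD1 (by omega)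
  refine key.trans ?_
  have h2 : (1 + |f x|) ^ K ≤ ((1 + Cf) * (1 + ‖x‖) ^ kf) ^ K :=
    pow_le_pow_left₀ (by positivity) h1fx K
  have h3 : D ^ n ≤ ((1 + Cf) * (1 + ‖x‖) ^ kf) ^ n :=
    pow_le_pow_left₀ (le_trans zero_le_one hD1) hDle n
  calc (n.factorial : ℝ) * (CG * (1 + |f x|) ^ K) * D ^ n
      ≤ (n.factorial : ℝ) * (CG * ((1 + Cf) * (1 + ‖x‖) ^ kf) ^ K) * ((1 + Cf) * (1 + ‖x‖) ^ kf) ^ n := by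
        have hCG0 : (0:ℝ) ≤ CG := le_trans zero_le_one hCG1
        have e1 : (n.factorial : ℝ) * (CG * (1 + |f x|) ^ K) * D ^ n
            ≤ (n.factorial : ℝ) * (CG * ((1 + Cf) * (1 + ‖x‖) ^ kf) ^ K) * D ^ n := by
          have := mul_le_mul_of_nonneg_left h2 hCG0
          have := mul_le_mul_of_nonneg_left this (by positivity : (0:ℝ) ≤ (n.factorial : ℝ))
          exact mul_le_mul_of_nonneg_right this (by positivity)
        refine e1.trans ?_
        have e2 := mul_le_mul_of_nonneg_left h3
          (by positivity : (0:ℝ) ≤ (n.factorial : ℝ) * (CG * ((1 + Cf) * (1 + ‖x‖) ^ kf) ^ K))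
        calc (n.factorial : ℝ) * (CG * ((1 + Cf) * (1 + ‖x‖) ^ kf) ^ K) * D ^ n
            = (n.factorial : ℝ) * (CG * ((1 + Cf) * (1 + ‖x‖) ^ kf) ^ K) * D ^ n := rfl
          _ ≤ _ := e2
    _ = (n.factorial : ℝ) * (CG * (1 + Cf) ^ K) * (1 + Cf) ^ n * (1 + ‖x‖) ^ (kf * K + kf * n) := by
        rw [mul_pow, mul_pow, ← pow_mul, ← pow_mul, pow_add]
        ring
    _ ≤ _ := le_of_eq (by ring)

lemma hasTemperateGrowth_mul {E A : Type*} [NormedAddCommGroup E] [NormedSpace ℝ E]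
    [NormedRing A] [NormedAlgebra ℝ A]
    {f g : E → A} (hf : Function.HasTemperateGrowth f) (hg : Function.HasTemperateGrowth g) :
    Function.HasTemperateGrowth (fun x => f x * g x) := by
  refine ⟨hf.1.mul hg.1, fun n => ?_⟩
  obtain ⟨kf, Cf, hCf0, hCf⟩ := hf.norm_iteratedFDeriv_le_uniform n
  obtain ⟨kg, Cg, hCg0, hCg⟩ := hg.norm_iteratedFDeriv_le_uniform n
  refine ⟨kf + kg, 2 ^ n * Cf * Cg, fun x => ?_⟩
  refine (norm_iteratedFDeriv_mul_le hf.1 hg.1 x (mod_cast le_top : (n : WithTop ℕ∞) ≤ ((⊤:ℕ∞) : WithTop ℕ∞))).trans ?_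
  have hbound : ∀ i ∈ Finset.range (n + 1),
      (n.choose i : ℝ) * ‖iteratedFDeriv ℝ i f x‖ * ‖iteratedFDeriv ℝ (n - i) g x‖
        ≤ (n.choose i : ℝ) * (Cf * Cg * (1 + ‖x‖) ^ (kf + kg)) := by
    intro i hi
    rw [Finset.mem_range] at hi
    have h1 := hCf i (by omega) x
    have h2 := hCg (n - i) (by omega) x
    have := mul_le_mul h1 h2 (norm_nonneg _) (by positivity)
    calc (n.choose i : ℝ) * ‖iteratedFDeriv ℝ i f x‖ * ‖iteratedFDeriv ℝ (n - i) g x‖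
        ≤ (n.choose i : ℝ) * ((Cf * (1 + ‖x‖) ^ kf) * (Cg * (1 + ‖x‖) ^ kg)) := by
          rw [mul_assoc]; gcongr <;> positivity
      _ = (n.choose i : ℝ) * (Cf * Cg * (1 + ‖x‖) ^ (kf + kg)) := by rw [pow_add]; ring
  refine (Finset.sum_le_sum hbound).trans ?_
  rw [← Finset.sum_mul]
  have : (∑ i ∈ Finset.range (n + 1), (n.choose i : ℝ)) = 2 ^ n := by
    rw [← Nat.cast_sum, Nat.sum_range_choose]; push_cast; ring
  rw [this]
  ring_nf
  try exact le_refl _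


lemma rpow_bound {c e u : ℝ} (hc : 0 < c) (hcu : c < u) (he : e ≤ 1) :
    u ^ e ≤ max (c ^ e) 1 * (1 + |u|) := by
  have hu : 0 < u := hc.trans hcu
  rw [abs_of_pos hu]
  rcases le_or_gt e 0 with he0 | he0
  · have h1 : u ^ e ≤ c ^ e := Real.rpow_le_rpow_of_nonpos hc hcu.le he0
    have h2 : c ^ e ≤ max (c ^ e) 1 := le_max_left _ _
    have h3 : (1:ℝ) ≤ 1 + u := by linarith
    nlinarith [Real.rpow_nonneg hc.le e, le_max_right (c ^ e) 1]
  · have h1 : u ^ e ≤ 1 + u := by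
      rcases le_or_gt u 1 with h | h
      · have := Real.rpow_le_one hu.le h he0.le
        linarith
      · have := Real.rpow_le_rpow_of_exponent_le h.le he
        rw [Real.rpow_one] at this
        linarith
    have h2 : (1:ℝ) ≤ max (c ^ e) 1 := le_max_right _ _
    nlinarith [Real.rpow_nonneg hu.le e]

lemma tg_rpow_smul_comp {E F : Type*} [NormedAddCommGroup E] [NormedSpace ℝ E]
    [NormedAddCommGroup F] [NormedSpace ℝ F]
    {f : E → ℝ} (hf : Function.HasTemperateGrowth f) {c : ℝ} (hc : 0 < c)
    (hmem : ∀ x, c < f x) {r : ℝ} (hr : r ≤ 1) (v : F) :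
    Function.HasTemperateGrowth (fun x => (f x) ^ r • v) := by
  refine hasTemperateGrowth_comp_of_bounds hf (g := fun u : ℝ => u ^ r • v) (c := c) ?_ hmem ?_
  · refine ContDiffOn.smul ?_ contDiffOn_const
    intro u hu
    exact (Real.contDiffAt_rpow_const_of_ne (ne_of_gt (hc.trans hu))).contDiffWithinAt
  · intro n
    refine ⟨1, |∏ i ∈ Finset.range n, (r - i)| * ‖v‖ * max (c ^ (r - n)) 1, by positivity, ?_⟩
    intro s hs
    rw [iteratedDeriv_rpow_smul r v n s (hc.trans hs)]
    rw [norm_smul, norm_mul]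
    have hb := rpow_bound hc hs (by push_cast; linarith [Nat.cast_nonneg (α := ℝ) n] : r - (n:ℝ) ≤ 1)
    have h0 : ‖s ^ (r - (n:ℝ))‖ = s ^ (r - (n:ℝ)) :=
      Real.norm_of_nonneg (Real.rpow_nonneg (hc.trans hs).le _)
    rw [h0, pow_one]
    calc ‖∏ i ∈ Finset.range n, (r - (i:ℝ))‖ * (s ^ (r - (n:ℝ))) * ‖v‖
        ≤ |∏ i ∈ Finset.range n, (r - (i:ℝ))| * (max (c ^ (r - n)) 1 * (1 + |s|)) * ‖v‖ := by
          rw [Real.norm_eq_abs]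
          gcongr
      _ = |∏ i ∈ Finset.range n, (r - (i:ℝ))| * ‖v‖ * max (c ^ (r - (n:ℝ))) 1 * (1 + |s|) := by ring

lemma tg_q (m : ℝ) : Function.HasTemperateGrowth
    (fun p : EuclideanSpace ℝ (Fin 3) => ‖p‖ ^ 2 + m ^ 2) := by
  have hderiv : ∀ x : EuclideanSpace ℝ (Fin 3),
      HasFDerivAt (fun p : EuclideanSpace ℝ (Fin 3) => ‖p‖ ^ 2 + m ^ 2)
        ((2 • (innerSL ℝ (E := EuclideanSpace ℝ (Fin 3)))) x) x := by
    intro x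
    have h := (hasStrictFDerivAt_norm_sq x).hasFDerivAt
    simpa using h.add_const (m ^ 2)
  refine Function.HasTemperateGrowth.of_fderiv ?_
    (fun x => (hderiv x).differentiableAt) (k := 2) (C := 1 + m ^ 2) (fun x => ?_)
  · have h : fderiv ℝ (fun p : EuclideanSpace ℝ (Fin 3) => ‖p‖ ^ 2 + m ^ 2)
        = fun x => (2 • (innerSL ℝ (E := EuclideanSpace ℝ (Fin 3)))) x :=
      funext fun x => (hderiv x).fderiv
    rw [h]
    exact (2 • (innerSL ℝ (E := EuclideanSpace ℝ (Fin 3)))).hasTemperateGrowth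
  · have h1 : ‖(‖x‖ ^ 2 + m ^ 2 : ℝ)‖ = ‖x‖ ^ 2 + m ^ 2 := Real.norm_of_nonneg (by positivity)
    rw [h1]
    have := norm_nonneg x
    nlinarith

lemma tg_relEnergy {m : ℝ} (hm : 0 < m) : Function.HasTemperateGrowth (relEnergy m) := by
  have h : relEnergy m = fun p : EuclideanSpace ℝ (Fin 3) =>
      ((fun p : EuclideanSpace ℝ (Fin 3) => ‖p‖ ^ 2 + m ^ 2) p) ^ (1/2 : ℝ) • (1:ℝ) := by
    funext p
    simp [relEnergy, Real.sqrt_eq_rpow]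
  rw [h]
  exact tg_rpow_smul_comp (tg_q m) (c := m ^ 2 / 2) (by positivity)
    (fun x => by nlinarith [sq_nonneg ‖x‖]) (by norm_num) (1:ℝ)

lemma relEnergy_pos {m : ℝ} (hm : 0 < m) (p : EuclideanSpace ℝ (Fin 3)) : 0 < relEnergy m p :=
  Real.sqrt_pos.2 (by positivity)

lemma m_le_relEnergy {m : ℝ} (hm : 0 < m) (p : EuclideanSpace ℝ (Fin 3)) : m ≤ relEnergy m p := by
  rw [relEnergy, show m ^ 2 = m * m from sq m]
  calc m = Real.sqrt (m * m) := (Real.sqrt_mul_self hm.le).symm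
    _ ≤ _ := Real.sqrt_le_sqrt (by nlinarith [sq_nonneg ‖p‖])

lemma tg_twoRelEnergy {m : ℝ} (hm : 0 < m) :
    Function.HasTemperateGrowth (fun p : EuclideanSpace ℝ (Fin 3) => 2 * relEnergy m p) :=
  hasTemperateGrowth_mul (Function.HasTemperateGrowth.const (2:ℝ)) (tg_relEnergy hm)

lemma tg_exp {m : ℝ} (hm : 0 < m) (t : ℝ) :
    Function.HasTemperateGrowth
      (fun p : EuclideanSpace ℝ (Fin 3) => Complex.exp (-(Complex.I * t) * (relEnergy m p : ℝ))) := by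
  refine hasTemperateGrowth_comp_of_bounds (tg_relEnergy hm)
    (g := fun s : ℝ => Complex.exp (-(Complex.I * t) * s)) (c := m / 2) ?_
    (fun x => lt_of_lt_of_le (by linarith) (m_le_relEnergy hm x)) ?_
  · refine ContDiff.contDiffOn ?_
    have h1 : ContDiff ℝ ((⊤:ℕ∞) : WithTop ℕ∞) (fun s : ℝ => -(Complex.I * t) * (s : ℂ)) := by
      have : (fun s : ℝ => -(Complex.I * t) * (s : ℂ))
          = fun s : ℝ => ((-(Complex.I * t)) • (Complex.ofRealCLM : ℝ →L[ℝ] ℂ)) s := by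
        funext s; simp [smul_eq_mul]
      rw [this]
      exact ((-(Complex.I * t)) • (Complex.ofRealCLM : ℝ →L[ℝ] ℂ)).contDiff
    exact (Complex.contDiff_exp (𝕜 := ℝ)).comp h1
  · intro n
    refine ⟨0, ‖-(Complex.I * t)‖ ^ n, by positivity, ?_⟩
    intro s _
    rw [iteratedDeriv_cexp_const]
    rw [pow_zero, mul_one, norm_mul, norm_pow]
    have : ‖Complex.exp (-(Complex.I * ↑t) * ↑s)‖ = 1 := by
      rw [Complex.norm_exp]
      have : (-(Complex.I * ↑t) * (s:ℂ)).re = 0 := by simp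
      rw [this, Real.exp_zero]
    rw [this, mul_one]

lemma tg_invsqrt {m : ℝ} (hm : 0 < m) :
    Function.HasTemperateGrowth
      (fun p : EuclideanSpace ℝ (Fin 3) => (((Real.sqrt (2 * relEnergy m p) : ℝ) : ℂ))⁻¹) := by
  have h : (fun p : EuclideanSpace ℝ (Fin 3) => (((Real.sqrt (2 * relEnergy m p) : ℝ) : ℂ))⁻¹)
      = fun p : EuclideanSpace ℝ (Fin 3) =>
        ((fun p : EuclideanSpace ℝ (Fin 3) => 2 * relEnergy m p) p) ^ (-(1/2) : ℝ) • (1 : ℂ) := by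
    funext p
    have h2e : (0:ℝ) < 2 * relEnergy m p := by linarith [relEnergy_pos hm p]
    rw [Real.sqrt_eq_rpow, Complex.real_smul, mul_one, ← Complex.ofReal_inv,
      ← Real.rpow_neg_one ((2 * relEnergy m p) ^ (1/2 : ℝ)), ← Real.rpow_mul h2e.le]
    norm_num
  rw [h]
  exact tg_rpow_smul_comp (tg_twoRelEnergy hm) (c := m) hm
    (fun p => by linarith [m_le_relEnergy hm p, relEnergy_pos hm p]) (by norm_num) (1:ℂ)

lemma tg_inv2eps {m : ℝ} (hm : 0 < m) :
    Function.HasTemperateGrowth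
      (fun p : EuclideanSpace ℝ (Fin 3) => (((2 * relEnergy m p : ℝ) : ℂ))⁻¹) := by
  have h : (fun p : EuclideanSpace ℝ (Fin 3) => (((2 * relEnergy m p : ℝ) : ℂ))⁻¹)
      = fun p : EuclideanSpace ℝ (Fin 3) =>
        ((fun p : EuclideanSpace ℝ (Fin 3) => 2 * relEnergy m p) p) ^ (-1 : ℝ) • (1 : ℂ) := by
    funext p
    have h2e : (0:ℝ) < 2 * relEnergy m p := by linarith [relEnergy_pos hm p]
    rw [Complex.real_smul, mul_one, ← Complex.ofReal_inv, Real.rpow_neg_one]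
  rw [h]
  exact tg_rpow_smul_comp (tg_twoRelEnergy hm) (c := m) hm
    (fun p => by linarith [m_le_relEnergy hm p, relEnergy_pos hm p]) (by norm_num) (1:ℂ)

lemma tg_mul1 {m : ℝ} (hm : 0 < m) (t : ℝ) :
    Function.HasTemperateGrowth
      (fun p : EuclideanSpace ℝ (Fin 3) =>
        (((Real.sqrt (2 * relEnergy m p) : ℝ) : ℂ))⁻¹
          * Complex.exp (-(Complex.I * t) * (relEnergy m p : ℝ))) :=
  hasTemperateGrowth_mul (tg_invsqrt hm) (tg_exp hm t)

lemma tg_mul2 {m : ℝ} (hm : 0 < m) (t : ℝ) :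
    Function.HasTemperateGrowth
      (fun p : EuclideanSpace ℝ (Fin 3) =>
        (((2 * relEnergy m p : ℝ) : ℂ))⁻¹
          * Complex.exp (-(Complex.I * t) * (relEnergy m p : ℝ))) :=
  hasTemperateGrowth_mul (tg_inv2eps hm) (tg_exp hm t)

lemma tg_mul3 {m : ℝ} (hm : 0 < m) (t : ℝ) :
    Function.HasTemperateGrowth
      (fun p : EuclideanSpace ℝ (Fin 3) =>
        (-Complex.I / 2) * Complex.exp (-(Complex.I * t) * (relEnergy m p : ℝ))) :=
  hasTemperateGrowth_mul (Function.HasTemperateGrowth.const _) (tg_exp hm t)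



lemma integrable_conj' {f : E3 → ℂ} (hf : Integrable f) :
    Integrable (fun x => (starRingEnd ℂ) (f x)) := by
  refine ⟨(Complex.continuous_conj.comp_aestronglyMeasurable hf.1 : _), ?_⟩
  simpa [HasFiniteIntegral] using hf.2

-- flip of innerₗ gives the same Fourier integral
lemma fourierIntegral_flip (u : E3 → ℂ) :
    VectorFourier.fourierIntegral 𝐞 volume (innerₗ E3).flip u = 𝓕 u := by
  funext x
  simp only [VectorFourier.fourierIntegral, LinearMap.flip_apply, innerₗ_apply_apply]
  congr 1
  funext v
  rw [real_inner_comm]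
  rfl

lemma fourierIntegralInv_conj (v : E3 → ℂ) (q : E3) :
    𝓕⁻ (fun x => (starRingEnd ℂ) (v x)) q = (starRingEnd ℂ) (𝓕 v q) := by
  rw [Real.fourierInv_eq', Real.fourier_eq']
  rw [← integral_conj]
  congr 1
  funext x
  rw [smul_eq_mul, smul_eq_mul, map_mul]
  congr 1
  rw [← Complex.exp_conj]
  congr 1
  simp [Complex.ext_iff]

lemma parseval_schwartz (a b : SchwartzMap E3 ℂ) :
    ∫ x : E3, (starRingEnd ℂ) (𝓕⁻ (⇑a) x) * 𝓕⁻ (⇑b) x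
      = ∫ q : E3, (starRingEnd ℂ) (a q) * b q := by
  have hia : Integrable (𝓕⁻ ⇑a) := by
    have := ((𝓕⁻ a : SchwartzMap E3 ℂ)).integrable (μ := volume)
    rwa [SchwartzMap.fourierInv_coe] at this
  have hib : Integrable (𝓕⁻ ⇑b) := by
    have := ((𝓕⁻ b : SchwartzMap E3 ℂ)).integrable (μ := volume)
    rwa [SchwartzMap.fourierInv_coe] at this
  have hfa : Integrable (𝓕 ⇑a) := by
    have := ((𝓕 a : SchwartzMap E3 ℂ)).integrable (μ := volume)
    rwa [SchwartzMap.fourier_coe] at this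
  set u : E3 → ℂ := fun x => (starRingEnd ℂ) (𝓕⁻ (⇑a) x) with hu
  have hui : Integrable u := integrable_conj' hia
  have hbn : Integrable (fun x : E3 => b (-x)) := by
    have h := (b.integrable (μ := volume)).comp_smul (R := (-1:ℝ)) (by norm_num)
    simpa using h
  have hinv : 𝓕 (𝓕⁻ ⇑a) = ⇑a :=
    Continuous.fourier_fourierInv_eq a.continuous (a.integrable (μ := volume)) hfa
  have flip := VectorFourier.integral_fourierIntegral_smul_eq_flip
    (L := innerₗ E3) (f := fun x : E3 => b (-x)) (g := u)
    Real.continuous_fourierChar (by exact continuous_inner) hbn hui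
  calc ∫ x : E3, (starRingEnd ℂ) (𝓕⁻ (⇑a) x) * 𝓕⁻ (⇑b) x
      = ∫ x : E3, VectorFourier.fourierIntegral 𝐞 volume (innerₗ E3)
          (fun y : E3 => b (-y)) x • u x := by
        congr 1
        funext x
        have h1 : 𝓕⁻ (⇑b) = 𝓕 (fun y : E3 => b (-y)) :=
          Real.fourierInv_eq_fourier_comp_neg (⇑b)
        rw [h1, smul_eq_mul, mul_comm]
        rfl
    _ = ∫ x : E3, b (-x) • VectorFourier.fourierIntegral 𝐞 volume (innerₗ E3).flip u x := flip
    _ = ∫ x : E3, b (-x) • 𝓕 u x := by rw [fourierIntegral_flip]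
    _ = ∫ x : E3, b x • 𝓕 u (-x) := by
        have := integral_neg_eq_self (fun x : E3 => b x • 𝓕 u (-x)) volume
        simpa using this
    _ = ∫ x : E3, b x • 𝓕⁻ u x := by
        congr 1
        funext x
        rw [Real.fourierInv_eq_fourier_neg]
    _ = ∫ q : E3, (starRingEnd ℂ) (a q) * b q := by
        congr 1
        funext q
        rw [hu]
        rw [fourierIntegralInv_conj (v := 𝓕⁻ (⇑a)) q, hinv, smul_eq_mul, mul_comm]

/-- dilation of a Schwartz function as a Schwartz function -/
def dilCLE (c : ℝ) (hc : c ≠ 0) : E3 ≃L[ℝ] E3 :=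
  (LinearEquiv.smulOfNeZero ℝ E3 c hc).toContinuousLinearEquiv

def dilS (c : ℝ) (hc : c ≠ 0) (a : SchwartzMap E3 ℂ) : SchwartzMap E3 ℂ :=
  SchwartzMap.compCLMOfContinuousLinearEquiv ℝ (dilCLE c hc) a

lemma dilS_apply (c : ℝ) (hc : c ≠ 0) (a : SchwartzMap E3 ℂ) (q : E3) :
    dilS c hc a q = a (c • q) := rfl

/-- the physicists' inverse Fourier-type integral -/
def invFT (a : E3 → ℂ) (x : E3) : ℂ :=
  ∫ p : E3, Complex.exp (Complex.I * ((inner ℝ x p : ℝ) : ℂ)) * a p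

lemma two_pi_pos : (0:ℝ) < 2 * Real.pi := by positivity

lemma invFT_eq (a : SchwartzMap E3 ℂ) (x : E3) :
    invFT (⇑a) x = (((2 * Real.pi) ^ (3:ℕ) : ℝ) : ℂ) * 𝓕⁻ (⇑(dilS (2 * Real.pi) two_pi_pos.ne' a)) x := by
  have h := MeasureTheory.Measure.integral_comp_smul (μ := volume)
    (fun p : E3 => Complex.exp (Complex.I * ((inner ℝ x p : ℝ) : ℂ)) * a p) (2 * Real.pi)
  have hrank : Module.finrank ℝ E3 = 3 := by
    simp [finrank_euclideanSpace]
  rw [hrank] at h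
  rw [Real.fourierInv_eq']
  have h2 : ∀ q : E3, Complex.exp (↑(2 * Real.pi * (inner ℝ q x : ℝ)) * Complex.I)
      • dilS (2 * Real.pi) two_pi_pos.ne' a q
      = Complex.exp (Complex.I * ((inner ℝ x ((2 * Real.pi) • q) : ℝ) : ℂ)) * a ((2 * Real.pi) • q) := by
    intro q
    rw [dilS_apply, smul_eq_mul]
    congr 2
    rw [real_inner_smul_right, real_inner_comm]
    push_cast
    ring
  rw [invFT]
  calc ∫ p : E3, Complex.exp (Complex.I * ((inner ℝ x p : ℝ) : ℂ)) * a p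
      = ((2 * Real.pi) ^ 3 : ℝ) • ∫ q : E3,
          Complex.exp (Complex.I * ((inner ℝ x ((2 * Real.pi) • q) : ℝ) : ℂ)) * a ((2 * Real.pi) • q) := by
        rw [h, smul_smul]
        have habs : ((2*Real.pi)^3 : ℝ) * |((2 * Real.pi) ^ 3)⁻¹| = 1 := by
          rw [abs_of_pos (by positivity : (0:ℝ) < ((2 * Real.pi) ^ 3)⁻¹)]
          field_simp
        rw [habs, one_smul]
    _ = _ := by
        rw [← funext h2, Complex.real_smul]

lemma masterParseval (a b : SchwartzMap E3 ℂ) :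
    (∫ x : E3, (starRingEnd ℂ) ((((2 * Real.pi) ^ (-(3:ℝ) / 2) : ℝ) : ℂ) * invFT (⇑a) x)
        * ((((2 * Real.pi) ^ (-(3:ℝ) / 2) : ℝ) : ℂ) * invFT (⇑b) x))
      = ∫ p : E3, (starRingEnd ℂ) (a p) * b p := by
  set C : ℝ := (2 * Real.pi) ^ (-(3:ℝ) / 2) with hC
  set A := dilS (2 * Real.pi) two_pi_pos.ne' a with hA
  set B := dilS (2 * Real.pi) two_pi_pos.ne' b with hB
  have hpt : ∀ x : E3, (starRingEnd ℂ) ((C:ℂ) * invFT (⇑a) x) * ((C:ℂ) * invFT (⇑b) x)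
      = ((((C * (2*Real.pi)^3)^2 : ℝ)) : ℂ) * ((starRingEnd ℂ) (𝓕⁻ (⇑A) x) * 𝓕⁻ (⇑B) x) := by
    intro x
    rw [invFT_eq a x, invFT_eq b x]
    simp only [map_mul, Complex.conj_ofReal]
    push_cast
    ring
  calc ∫ x : E3, (starRingEnd ℂ) ((C:ℂ) * invFT (⇑a) x) * ((C:ℂ) * invFT (⇑b) x)
      = ∫ x : E3, ((((C * (2*Real.pi)^3)^2 : ℝ)) : ℂ)
          * ((starRingEnd ℂ) (𝓕⁻ (⇑A) x) * 𝓕⁻ (⇑B) x) := by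
        exact congrArg _ (funext hpt)
    _ = ((((C * (2*Real.pi)^3)^2 : ℝ)) : ℂ) * ∫ x : E3, (starRingEnd ℂ) (𝓕⁻ (⇑A) x) * 𝓕⁻ (⇑B) x := by
        exact integral_const_mul _ _
    _ = ((((C * (2*Real.pi)^3)^2 : ℝ)) : ℂ) * ∫ q : E3, (starRingEnd ℂ) (A q) * B q := by
        rw [parseval_schwartz A B]
    _ = ∫ p : E3, (starRingEnd ℂ) (a p) * b p := by
        have hsub := MeasureTheory.Measure.integral_comp_smul (μ := volume)
          (fun p : E3 => (starRingEnd ℂ) (a p) * b p) (2 * Real.pi)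
        have hrank : Module.finrank ℝ E3 = 3 := by simp [finrank_euclideanSpace]
        rw [hrank] at hsub
        have hAB : (fun q : E3 => (starRingEnd ℂ) (A q) * B q)
            = fun q : E3 => (starRingEnd ℂ) (a ((2 * Real.pi) • q)) * b ((2 * Real.pi) • q) := rfl
        rw [hAB, hsub, Complex.real_smul]
        rw [← mul_assoc, ← Complex.ofReal_mul]
        have hC2 : C ^ 2 = ((2 * Real.pi) ^ 3)⁻¹ := by
          rw [hC, ← Real.rpow_natCast ((2 * Real.pi) ^ (-(3:ℝ)/2)) 2, ← Real.rpow_mul two_pi_pos.le]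
          norm_num
        have hfinal : (C * (2 * Real.pi) ^ 3) ^ 2 * |((2 * Real.pi) ^ 3)⁻¹| = 1 := by
          rw [abs_of_pos (by positivity : (0:ℝ) < ((2 * Real.pi) ^ 3)⁻¹)]
          rw [mul_pow, hC2]
          have h1 : ((2 * Real.pi) ^ 3 : ℝ) ≠ 0 := by positivity
          field_simp
        rw [hfinal]
        simp

def mulSchwartz {g : E3 → ℂ} (hg : Function.HasTemperateGrowth g) :
    SchwartzMap E3 ℂ →L[ℝ] SchwartzMap E3 ℂ :=
  SchwartzMap.bilinLeftCLM (ContinuousLinearMap.mul ℝ ℂ) hg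

lemma mulSchwartz_apply {g : E3 → ℂ} (hg : Function.HasTemperateGrowth g)
    (ψ : SchwartzMap E3 ℂ) (x : E3) : mulSchwartz hg ψ x = ψ x * g x := rfl

variable {m : ℝ}

/-- Schwartz profile for the Newton-Wigner function -/
def M1 (hm : 0 < m) (t : ℝ) (ψ : SchwartzMap E3 ℂ) : SchwartzMap E3 ℂ :=
  mulSchwartz (tg_mul1 hm t) ψ

def M2 (hm : 0 < m) (t : ℝ) (ψ : SchwartzMap E3 ℂ) : SchwartzMap E3 ℂ :=
  mulSchwartz (tg_mul2 hm t) ψ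

def M3 (hm : 0 < m) (t : ℝ) (ψ : SchwartzMap E3 ℂ) : SchwartzMap E3 ℂ :=
  mulSchwartz (tg_mul3 hm t) ψ

lemma nw_eq (hm : 0 < m) (ψ : SchwartzMap E3 ℂ) (t : ℝ) (x : E3) :
    newtonWigner m ψ t x
      = (((2 * Real.pi) ^ (-(3:ℝ) / 2) : ℝ) : ℂ) * invFT (⇑(M1 hm t ψ)) x := by
  rw [newtonWigner, invFT]
  congr 1
  congr 1
  funext p
  rw [M1, mulSchwartz_apply]
  rw [show Complex.I * (((inner ℝ x p : ℝ) : ℂ) - (t : ℂ) * ((relEnergy m p : ℝ) : ℂ))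
      = Complex.I * ((inner ℝ x p : ℝ) : ℂ)
        + (-(Complex.I * t) * ((relEnergy m p : ℝ) : ℂ)) by ring]
  rw [Complex.exp_add]
  ring

lemma kg_eq (hm : 0 < m) (ψ : SchwartzMap E3 ℂ) (t : ℝ) (x : E3) :
    kgSolution m 1 ψ t x
      = (((2 * Real.pi) ^ (-(3:ℝ) / 2) : ℝ) : ℂ) * invFT (⇑(M2 hm t ψ)) x := by
  rw [kgSolution, invFT]
  congr 1
  congr 1
  funext p
  rw [M2, mulSchwartz_apply]
  rw [show Complex.I * (((inner ℝ x p : ℝ) : ℂ) - ((1:ℝ) : ℂ) * (t : ℂ) * ((relEnergy m p : ℝ) : ℂ))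
      = Complex.I * ((inner ℝ x p : ℝ) : ℂ)
        + (-(Complex.I * t) * ((relEnergy m p : ℝ) : ℂ)) by push_cast; ring]
  rw [Complex.exp_add]
  ring

lemma continuous_relEnergy (hm : 0 < m) : Continuous (relEnergy m) :=
  (tg_relEnergy hm).1.continuous

lemma kg_hasDerivAt (hm : 0 < m) (ψ : SchwartzMap E3 ℂ) (t : ℝ) (x : E3) :
    HasDerivAt (fun t' : ℝ => kgSolution m 1 ψ t' x)
      ((((2 * Real.pi) ^ (-(3:ℝ) / 2) : ℝ) : ℂ) * invFT (⇑(M3 hm t ψ)) x) t := by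
  set H : E3 → ℂ := fun p =>
    ((2 * relEnergy m p : ℝ) : ℂ)⁻¹ * Complex.exp (Complex.I * ((inner ℝ x p : ℝ) : ℂ)) * ψ p with hH
  set cp : E3 → ℂ := fun p => -(Complex.I * ((relEnergy m p : ℝ) : ℂ)) with hcp
  have hEpos : ∀ p : E3, 0 < relEnergy m p := relEnergy_pos hm
  have hfun : ∀ t' : ℝ, kgSolution m 1 ψ t' x
      = (((2 * Real.pi) ^ (-(3:ℝ) / 2) : ℝ) : ℂ) * ∫ p : E3, H p * Complex.exp (cp p * t') := by
    intro t'
    rw [kgSolution]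
    congr 1
    congr 1
    funext p
    rw [show Complex.I * (((inner ℝ x p : ℝ) : ℂ) - ((1:ℝ) : ℂ) * (t' : ℂ) * ((relEnergy m p : ℝ) : ℂ))
        = Complex.I * ((inner ℝ x p : ℝ) : ℂ)
          + (-(Complex.I * ((relEnergy m p : ℝ) : ℂ)) * (t' : ℂ)) by push_cast; ring]
    rw [Complex.exp_add, hH, hcp]
    ring
  have hcont_inner : Continuous (fun p : E3 => Complex.exp (Complex.I * ((inner ℝ x p : ℝ) : ℂ))) := by
    refine Complex.continuous_exp.comp ?_
    exact continuous_const.mul (Complex.continuous_ofReal.comp (continuous_const.inner continuous_id))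
  have hcont_inv : Continuous (fun p : E3 => ((2 * relEnergy m p : ℝ) : ℂ)⁻¹) :=
    (tg_inv2eps hm).1.continuous
  have hHcont : Continuous H := ((hcont_inv.mul hcont_inner).mul ψ.continuous)
  have hcpcont : Continuous cp :=
    (continuous_const.mul (Complex.continuous_ofReal.comp (continuous_relEnergy hm))).neg
  have hecont : ∀ t' : ℝ, Continuous (fun p : E3 => Complex.exp (cp p * t')) := fun t' =>
    Complex.continuous_exp.comp (hcpcont.mul continuous_const)
  have hnorm_exp_inner : ∀ p : E3, ‖Complex.exp (Complex.I * ((inner ℝ x p : ℝ) : ℂ))‖ = 1 := by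
    intro p
    rw [Complex.norm_exp]
    simp
  have hnorm_exp_cp : ∀ (p : E3) (t' : ℝ), ‖Complex.exp (cp p * t')‖ = 1 := by
    intro p t'
    rw [Complex.norm_exp, hcp]
    simp
  have hnormH : ∀ p : E3, ‖H p‖ = (2 * relEnergy m p)⁻¹ * ‖ψ p‖ := by
    intro p
    rw [hH]
    simp only [norm_mul, hnorm_exp_inner, mul_one]
    rw [norm_inv, Complex.norm_real, Real.norm_eq_abs,
      abs_of_pos (by linarith [hEpos p] : (0:ℝ) < 2 * relEnergy m p)]
  have key := hasDerivAt_integral_of_dominated_loc_of_deriv_le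
    (F := fun (t' : ℝ) (p : E3) => H p * Complex.exp (cp p * t'))
    (F' := fun (t' : ℝ) (p : E3) => H p * (Complex.exp (cp p * t') * cp p))
    (x₀ := t) (s := Metric.ball t 1) (bound := fun p : E3 => (1/2 : ℝ) * ‖ψ p‖) (Metric.ball_mem_nhds t one_pos)
    (Filter.Eventually.of_forall fun t' =>
      ((hHcont.mul (hecont t')).aestronglyMeasurable))
    ?_ (((hHcont.mul ((hecont t).mul hcpcont))).aestronglyMeasurable)
    (Filter.Eventually.of_forall fun p => ?_) ((ψ.integrable (μ := volume)).norm.const_mul _)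
    (Filter.Eventually.of_forall fun p => ?_)
  · obtain ⟨-, hd⟩ := key
    have hd2 := hd.const_mul ((((2 * Real.pi) ^ (-(3:ℝ) / 2) : ℝ) : ℂ))
    beta_reduce at hd2
    have hfe : (fun t' : ℝ => (((2 * Real.pi) ^ (-(3:ℝ) / 2) : ℝ) : ℂ)
        * ∫ p : E3, H p * Complex.exp (cp p * t'))
        = fun t' : ℝ => kgSolution m 1 ψ t' x := funext fun t' => (hfun t').symm
    rw [hfe] at hd2
    have hin : (∫ p : E3, H p * (Complex.exp (cp p * t) * cp p)) = invFT (⇑(M3 hm t ψ)) x := by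
      rw [invFT]
      congr 1
      funext p
      rw [M3, mulSchwartz_apply]
      have hE0 : ((relEnergy m p : ℝ) : ℂ) ≠ 0 := by
        exact_mod_cast (hEpos p).ne'
      have hhalf : ((2 * relEnergy m p : ℝ) : ℂ)⁻¹ * (-(Complex.I * ((relEnergy m p : ℝ) : ℂ)))
          = -Complex.I / 2 := by
        rw [Complex.ofReal_mul]
        field_simp
        push_cast; ring
      have hexp : Complex.exp (-(Complex.I * ((relEnergy m p : ℝ) : ℂ)) * (t:ℂ))
          = Complex.exp (-(Complex.I * t) * ((relEnergy m p : ℝ) : ℂ)) :=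
        congrArg Complex.exp (by ring)
      simp only [hH, hcp]
      rw [hexp]
      linear_combination (Complex.exp (Complex.I * ((inner ℝ x p : ℝ) : ℂ)) * ψ p
        * Complex.exp (-(Complex.I * t) * ((relEnergy m p : ℝ) : ℂ))) * hhalf
    rw [hin] at hd2
    exact hd2
  · -- integrability of F t
    have hb : Integrable (fun p : E3 =>
        (((2 * relEnergy m p : ℝ) : ℂ)⁻¹ * Complex.exp (Complex.I * ((inner ℝ x p : ℝ) : ℂ))
          * Complex.exp (cp p * t)) * ψ p) := by
      refine (ψ.integrable (μ := volume)).bdd_mul (c := (2 * m)⁻¹) ?_ ?_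
      · exact ((hcont_inv.mul hcont_inner).mul (hecont t)).aestronglyMeasurable
      · refine Filter.Eventually.of_forall fun p => ?_
        simp only [norm_mul, hnorm_exp_inner, hnorm_exp_cp, mul_one]
        rw [norm_inv, Complex.norm_real, Real.norm_eq_abs,
          abs_of_pos (by linarith [hEpos p] : (0:ℝ) < 2 * relEnergy m p)]
        have h1 : 2 * m ≤ 2 * relEnergy m p := by linarith [m_le_relEnergy hm p]
        exact inv_anti₀ (by linarith) h1
    refine hb.congr (Filter.Eventually.of_forall fun p => ?_)
    rw [hH]
    ring
  · -- bound
    intro t' _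
    simp only [norm_mul, hnorm_exp_cp, one_mul]
    rw [hnormH p]
    have hcpn : ‖cp p‖ = relEnergy m p := by
      rw [hcp]
      simp [abs_of_pos (hEpos p)]
    rw [hcpn]
    have hE := hEpos p
    rw [show (2 * relEnergy m p)⁻¹ * ‖ψ p‖ * relEnergy m p = (1/2 : ℝ) * ‖ψ p‖ by
      field_simp]
  · -- HasDerivAt
    intro t' _
    have h0 : HasDerivAt (fun s : ℝ => cp p * (s : ℂ)) (cp p) t' := by
      simpa using ((hasDerivAt_id t').ofReal_comp).const_mul (cp p)
    exact (h0.cexp).const_mul (H p)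

lemma schwartz_symm_coe (a : SchwartzMap E3 ℂ) :
    ⇑((FourierTransform.fourierCLE ℂ (SchwartzMap E3 ℂ)).symm a) = 𝓕⁻ ⇑a := by
  rw [FourierTransform.fourierCLE_symm_apply, SchwartzMap.fourierInv_coe]

lemma integrable_NWprod (a b : SchwartzMap E3 ℂ) :
    Integrable (fun x : E3 =>
      (starRingEnd ℂ) ((((2 * Real.pi) ^ (-(3:ℝ) / 2) : ℝ) : ℂ) * invFT (⇑a) x)
        * ((((2 * Real.pi) ^ (-(3:ℝ) / 2) : ℝ) : ℂ) * invFT (⇑b) x)) := by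
  set SA := (FourierTransform.fourierCLE ℂ (SchwartzMap E3 ℂ)).symm (dilS (2 * Real.pi) two_pi_pos.ne' a) with hSA
  set SB := (FourierTransform.fourierCLE ℂ (SchwartzMap E3 ℂ)).symm (dilS (2 * Real.pi) two_pi_pos.ne' b) with hSB
  set K : ℂ := (((((2 * Real.pi) ^ (-(3:ℝ) / 2) : ℝ)) : ℂ) * ((((2 * Real.pi) ^ (3:ℕ) : ℝ)) : ℂ)) ^ 2 with hK
  have hpt : ∀ x : E3,
      (starRingEnd ℂ) ((((2 * Real.pi) ^ (-(3:ℝ) / 2) : ℝ) : ℂ) * invFT (⇑a) x)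
        * ((((2 * Real.pi) ^ (-(3:ℝ) / 2) : ℝ) : ℂ) * invFT (⇑b) x)
      = K * ((starRingEnd ℂ) (SA x) * SB x) := by
    intro x
    rw [invFT_eq a x, invFT_eq b x, hSA, hSB, schwartz_symm_coe, schwartz_symm_coe, hK]
    simp only [map_mul, Complex.conj_ofReal]
    ring
  have hint : Integrable (fun x : E3 => (starRingEnd ℂ) (SA x) * SB x) := by
    refine (SB.integrable (μ := volume)).bdd_mul (c := (SchwartzMap.seminorm ℝ 0 0) SA) ?_ ?_
    · exact (Complex.continuous_conj.comp SA.continuous).aestronglyMeasurable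
    · refine Filter.Eventually.of_forall fun x => ?_
      rw [RCLike.norm_conj]
      exact SA.norm_le_seminorm ℝ x
  exact (hint.const_mul _).congr (Filter.Eventually.of_forall fun x => (hpt x).symm)

lemma conj_exp_mul (t e : ℝ) :
    (starRingEnd ℂ) (Complex.exp (-(Complex.I * t) * (e : ℂ)))
      * Complex.exp (-(Complex.I * t) * (e : ℂ)) = 1 := by
  rw [← Complex.exp_conj, ← Complex.exp_add]
  rw [show (starRingEnd ℂ) (-(Complex.I * t) * (e : ℂ)) = Complex.I * t * e by
    simp [map_mul, Complex.conj_ofReal]]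
  rw [show Complex.I * t * e + -(Complex.I * t) * (e : ℂ) = 0 by ring, Complex.exp_zero]

end Aux

/-- The Klein–Gordon inner product of positive-frequency solutions assumes the standard
Schrödinger form when expressed in terms of the Newton–Wigner wave functions. -/
theorem newtonWigner_schroedinger_form
    (m : ℝ) (hm : 0 < m)
    (φt ψt : SchwartzMap (EuclideanSpace ℝ (Fin 3)) ℂ) :
    ∀ t : ℝ,
      (∫ x : EuclideanSpace ℝ (Fin 3),
          starRingEnd ℂ (newtonWigner m φt t x) * newtonWigner m ψt t x)
        = (∫ p : EuclideanSpace ℝ (Fin 3),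
            ((2 * relEnergy m p : ℝ) : ℂ)⁻¹ * starRingEnd ℂ (φt p) * ψt p) ∧
      (∫ p : EuclideanSpace ℝ (Fin 3),
          ((2 * relEnergy m p : ℝ) : ℂ)⁻¹ * starRingEnd ℂ (φt p) * ψt p)
        = kgPairing (kgSolution m 1 φt) (kgSolution m 1 ψt) t := by
  intro t
  constructor
  · -- Part 1
    have h1 : (∫ x : EuclideanSpace ℝ (Fin 3),
        starRingEnd ℂ (newtonWigner m φt t x) * newtonWigner m ψt t x)
        = ∫ x : EuclideanSpace ℝ (Fin 3),
          starRingEnd ℂ ((((2 * Real.pi) ^ (-(3:ℝ) / 2) : ℝ) : ℂ) * invFT (⇑(M1 hm t φt)) x)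
            * ((((2 * Real.pi) ^ (-(3:ℝ) / 2) : ℝ) : ℂ) * invFT (⇑(M1 hm t ψt)) x) := by
      congr 1
      funext x
      rw [nw_eq hm φt t x, nw_eq hm ψt t x]
    rw [h1, masterParseval (M1 hm t φt) (M1 hm t ψt)]
    congr 1
    funext p
    rw [M1, mulSchwartz_apply, M1, mulSchwartz_apply]
    have h2e : (0:ℝ) ≤ 2 * relEnergy m p := by linarith [relEnergy_pos hm p]
    have hsq : (((Real.sqrt (2 * relEnergy m p) : ℝ) : ℂ))⁻¹
        * (((Real.sqrt (2 * relEnergy m p) : ℝ) : ℂ))⁻¹ = ((2 * relEnergy m p : ℝ) : ℂ)⁻¹ := by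
      rw [← mul_inv, ← Complex.ofReal_mul, Real.mul_self_sqrt h2e]
    have he := conj_exp_mul t (relEnergy m p)
    simp only [map_mul, map_inv₀, Complex.conj_ofReal]
    linear_combination (starRingEnd ℂ (φt p) * ψt p
        * (((Real.sqrt (2 * relEnergy m p) : ℝ) : ℂ))⁻¹
        * (((Real.sqrt (2 * relEnergy m p) : ℝ) : ℂ))⁻¹) * he
      + (starRingEnd ℂ (φt p) * ψt p) * hsq
  · -- Part 2
    symm
    rw [kgPairing]
    have hderψ : ∀ x : EuclideanSpace ℝ (Fin 3),
        deriv (fun t' : ℝ => kgSolution m 1 ψt t' x) t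
          = (((2 * Real.pi) ^ (-(3:ℝ) / 2) : ℝ) : ℂ) * invFT (⇑(M3 hm t ψt)) x :=
      fun x => (kg_hasDerivAt hm ψt t x).deriv
    have hderφ : ∀ x : EuclideanSpace ℝ (Fin 3),
        deriv (fun t' : ℝ => kgSolution m 1 φt t' x) t
          = (((2 * Real.pi) ^ (-(3:ℝ) / 2) : ℝ) : ℂ) * invFT (⇑(M3 hm t φt)) x :=
      fun x => (kg_hasDerivAt hm φt t x).deriv
    have hfun : (fun x : EuclideanSpace ℝ (Fin 3) =>
        starRingEnd ℂ (kgSolution m 1 φt t x) * deriv (fun t' : ℝ => kgSolution m 1 ψt t' x) t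
          - starRingEnd ℂ (deriv (fun t' : ℝ => kgSolution m 1 φt t' x) t) * kgSolution m 1 ψt t x)
        = fun x : EuclideanSpace ℝ (Fin 3) =>
          (starRingEnd ℂ ((((2 * Real.pi) ^ (-(3:ℝ) / 2) : ℝ) : ℂ) * invFT (⇑(M2 hm t φt)) x)
            * ((((2 * Real.pi) ^ (-(3:ℝ) / 2) : ℝ) : ℂ) * invFT (⇑(M3 hm t ψt)) x))
          - (starRingEnd ℂ ((((2 * Real.pi) ^ (-(3:ℝ) / 2) : ℝ) : ℂ) * invFT (⇑(M3 hm t φt)) x)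
            * ((((2 * Real.pi) ^ (-(3:ℝ) / 2) : ℝ) : ℂ) * invFT (⇑(M2 hm t ψt)) x)) := by
      funext x
      rw [kg_eq hm φt t x, kg_eq hm ψt t x, hderψ x, hderφ x]
    rw [hfun]
    rw [integral_sub (integrable_NWprod (M2 hm t φt) (M3 hm t ψt))
      (integrable_NWprod (M3 hm t φt) (M2 hm t ψt))]
    rw [masterParseval (M2 hm t φt) (M3 hm t ψt), masterParseval (M3 hm t φt) (M2 hm t ψt)]
    have hX : (∫ p : EuclideanSpace ℝ (Fin 3), starRingEnd ℂ ((M2 hm t φt) p) * (M3 hm t ψt) p)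
        = (-Complex.I / 2) * ∫ p : EuclideanSpace ℝ (Fin 3),
            ((2 * relEnergy m p : ℝ) : ℂ)⁻¹ * starRingEnd ℂ (φt p) * ψt p := by
      rw [← integral_const_mul]
      congr 1
      funext p
      rw [M2, mulSchwartz_apply, M3, mulSchwartz_apply]
      have he := conj_exp_mul t (relEnergy m p)
      simp only [map_mul, map_inv₀, Complex.conj_ofReal]
      linear_combination (starRingEnd ℂ (φt p) * ψt p * (-Complex.I / 2)
        * ((2 * relEnergy m p : ℝ) : ℂ)⁻¹) * he
    have hY : (∫ p : EuclideanSpace ℝ (Fin 3), starRingEnd ℂ ((M3 hm t φt) p) * (M2 hm t ψt) p)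
        = (Complex.I / 2) * ∫ p : EuclideanSpace ℝ (Fin 3),
            ((2 * relEnergy m p : ℝ) : ℂ)⁻¹ * starRingEnd ℂ (φt p) * ψt p := by
      rw [← integral_const_mul]
      congr 1
      funext p
      rw [M3, mulSchwartz_apply, M2, mulSchwartz_apply]
      have he := conj_exp_mul t (relEnergy m p)
      simp only [map_mul, map_inv₀, map_div₀, map_neg, Complex.conj_I, Complex.conj_ofReal,
        map_ofNat]
      linear_combination (starRingEnd ℂ (φt p) * ψt p * (Complex.I / 2)
        * ((2 * relEnergy m p : ℝ) : ℂ)⁻¹) * he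
    rw [hX, hY]
    linear_combination (-(∫ p : EuclideanSpace ℝ (Fin 3),
      ((2 * relEnergy m p : ℝ) : ℂ)⁻¹ * starRingEnd ℂ (φt p) * ψt p)) * Complex.I_mul_I

end
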